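/- Let k ≥ 1, T ∈ Tab(1,k) and a ∈ ℂ∖{0}. The monomial m^{(1)}_{T,a} is dominant (all its exponents are ≥ 0) if and only if T = (1,1,…,1), in which case m^{(1)}_{T,a} = ∏_{p=1}^{k} Z_{1,aq^{2(p−1)}}. Consequently the sum Σ_{T∈Tab(1,k)} m^{(1)}_{T,a} ∈ ℤ[G] has a unique dominant monomial, occurring with coefficient 1 (the Kirillov–Reshetikhin module W^{(1)}_{k,a} of type D_4^{(3)} is special). -/

import Mathlib

noncomputable section

/-- The set `B = {1,2,3,4,4̄,3̄,2̄,1̄}`. -/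
inductive BB : Type
  | b1 | b2 | b3 | b4 | b4' | b3' | b2' | b1'
  deriving DecidableEq

instance instFintypeBB : Fintype BB :=
  ⟨{.b1, .b2, .b3, .b4, .b4', .b3', .b2', .b1'}, fun x => by cases x <;> decide⟩

/-- The rank used to define the partial order on `B`
(`4` and `4̄` get the same rank, making them incomparable). -/
def BB.rank : BB → ℕ
  | .b1 => 0 | .b2 => 1 | .b3 => 2 | .b4 => 3 | .b4' => 3
  | .b3' => 4 | .b2' => 5 | .b1' => 6

/-- The partial order `⪯` on `B` : `1 ≺ 2 ≺ 3 ≺ 4 ≺ 3̄ ≺ 2̄ ≺ 1̄` and `3 ≺ 4̄ ≺ 3̄`,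
with `4` and `4̄` incomparable. -/
def BB.le (x y : BB) : Prop := x = y ∨ x.rank < y.rank

/-- The strict order `≺` on `B`. -/
def BB.lt (x y : BB) : Prop := x.rank < y.rank

/-- Monomials: the free abelian group on `{1,2} × ℂˣ`, written additively;
`Finsupp.single (i,b) 1` corresponds to the generator `Z_{i+1,b}`. -/
abbrev Mon2 : Type := (Fin 2 × ℂˣ) →₀ ℤ

/-- The group ring `ℤ[G]`. -/
abbrev LR2 : Type := AddMonoidAlgebra ℤ Mon2

/-- The generator `Z_{i,b}` (with `i : Fin 2` indexing `{1,2}`). -/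
def Zv (i : Fin 2) (b : ℂˣ) : Mon2 := Finsupp.single (i, b) 1

/-- `j = e^{2iπ/3}`, a primitive cube root of unity, as a unit of `ℂ`. -/
def jC : ℂˣ := Units.mk0 (Complex.exp (2 * Real.pi * Complex.I / 3)) (Complex.exp_ne_zero _)

/-- The boxes `⟦α⟧_a ∈ G` for `α ∈ B` (written additively). -/
def box (q : ℂˣ) : BB → ℂˣ → Mon2
  | .b1, a => Zv 0 a
  | .b2, a => -Zv 0 (a * q ^ 2) + Zv 1 (a ^ 3 * q ^ 3)
  | .b3, a => -Zv 1 (a ^ 3 * q ^ 9) + Zv 0 (a * q ^ 2 * jC) + Zv 0 (a * q ^ 2 * jC ^ 2)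
  | .b4, a => Zv 0 (a * q ^ 2 * jC) - Zv 0 (a * q ^ 4 * jC ^ 2)
  | .b4', a => Zv 0 (a * q ^ 2 * jC ^ 2) - Zv 0 (a * q ^ 4 * jC)
  | .b3', a => -Zv 0 (a * q ^ 4 * jC) - Zv 0 (a * q ^ 4 * jC ^ 2) + Zv 1 (a ^ 3 * q ^ 9)
  | .b2', a => Zv 0 (a * q ^ 4) - Zv 1 (a ^ 3 * q ^ 15)
  | .b1', a => -Zv 0 (a * q ^ 6)

/-- `Tab(1,k)`: sequences `(T_1,…,T_k)` in `B` with `T_p ⪯ T_{p+1}`. -/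
def IsTab1 (k : ℕ) (T : Fin k → BB) : Prop :=
  ∀ (p : ℕ) (h : p + 1 < k), BB.le (T ⟨p, Nat.lt_of_succ_lt h⟩) (T ⟨p + 1, h⟩)

/-- The monomial `m^{(1)}_{T,a} = ∏_{p=1}^{k} ⟦T_p⟧_{aq^{2(p-1)}}` (written additively). -/
def m1 (q : ℂˣ) {k : ℕ} (T : Fin k → BB) (a : ℂˣ) : Mon2 :=
  ∑ p : Fin k, box q (T p) (a * q ^ (2 * (p : ℕ)))

/-- `Tab(2,k)`: two-row arrays with entries in `B` satisfying (θ1)–(θ4).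
Row `i : Fin 2` corresponds to row `i+1` of the paper. -/
def IsTab2 (k : ℕ) (T : Fin 2 → Fin k → BB) : Prop :=
  (∀ i : Fin 2, IsTab1 k (T i)) ∧
  (∀ p : Fin k, ¬ BB.le (T 1 p) (T 0 p)) ∧
  (¬ ∃ p p' : Fin k, p < p' ∧
      (∀ r : Fin k, p ≤ r → r < p' → T 0 r = BB.b3) ∧ T 0 p' = BB.b4 ∧
      T 1 p = BB.b4 ∧ (∀ r : Fin k, p < r → r ≤ p' → T 1 r = BB.b3')) ∧
  (¬ ∃ p p' : Fin k, p < p' ∧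
      (∀ r : Fin k, p ≤ r → r < p' → T 0 r = BB.b3) ∧ T 0 p' = BB.b4' ∧
      T 1 p = BB.b4' ∧ (∀ r : Fin k, p < r → r ≤ p' → T 1 r = BB.b3'))

/-- The monomial `m^{(2)}_{T,a} = ∏_{i∈{1,2}} ∏_{p=1}^{k} ⟦T_{i,p}⟧_{aq^{2(p-i)}}`
(written additively; rows and columns are 0-indexed). -/
def m2 (q : ℂˣ) {k : ℕ} (T : Fin 2 → Fin k → BB) (a : ℂˣ) : Mon2 :=
  ∑ i : Fin 2, ∑ p : Fin k, box q (T i p) (a * q ^ (2 * ((p : ℤ) - (i : ℤ))))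

open Classical in
/-- `S¹_k(a) = Σ_{T ∈ Tab(1,k)} m^{(1)}_{T,a}` in the group ring `ℤ[G]`. -/
def S1 (q : ℂˣ) (k : ℕ) (a : ℂˣ) : LR2 :=
  ∑ T : Fin k → BB, if IsTab1 k T then AddMonoidAlgebra.single (m1 q T a) 1 else 0

lemma twopiI_ne : (2 * (Real.pi:ℂ) * Complex.I) ≠ 0 := by
  simp [Real.pi_ne_zero, Complex.I_ne_zero]

lemma jC3 : (jC : ℂ)^3 = 1 := by
  show (Complex.exp _)^3 = 1
  rw [← Complex.exp_nat_mul]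
  push_cast
  rw [show (3:ℂ) * (2 * Real.pi * Complex.I / 3) = 2 * Real.pi * Complex.I by ring]
  exact Complex.exp_two_pi_mul_I

lemma jC1 : (jC : ℂ) ≠ 1 := by
  intro h
  obtain ⟨n, hn⟩ := Complex.exp_eq_one_iff.mp h
  have h3 : (1:ℂ) = 3 * n :=
    mul_right_cancel₀ twopiI_ne (by rw [one_mul, show (3:ℂ)*n * (2 * Real.pi * Complex.I) = 3 * (n * (2*Real.pi*Complex.I)) by ring, ← hn]; ring)
  have : ((1:ℤ):ℂ) = ((3*n:ℤ):ℂ) := by push_cast; linear_combination h3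
  have := Int.cast_injective (α := ℂ) this
  omega

lemma jC_ne_zero : (jC:ℂ) ≠ 0 := jC.ne_zero

lemma jC2 : ((jC:ℂ))^2 ≠ 1 := by
  intro h
  have : (jC:ℂ) = 1 := by
    calc (jC:ℂ) = (jC:ℂ)^3 * jC := by rw [jC3]; ring
      _ = ((jC:ℂ)^2)^2 := by ring
      _ = 1 := by rw [h]; norm_num
  exact jC1 this

lemma jmod (r : ℕ) : (jC:ℂ)^r = (jC:ℂ)^(r % 3) := by
  conv_lhs => rw [← Nat.div_add_mod r 3, pow_add, pow_mul, jC3, one_pow, one_mul]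

lemma jpow_inj {r r' : ℕ} (h : (jC:ℂ)^r = (jC:ℂ)^r') : r % 3 = r' % 3 := by
  have hne : (jC:ℂ) ≠ (jC:ℂ)^2 := by
    intro h2
    exact jC1 (mul_left_cancel₀ jC_ne_zero
      (show (jC:ℂ)*1 = jC*jC by rw [mul_one, ← pow_two]; exact h2) : (1:ℂ) = jC).symm
  rw [jmod, jmod r'] at h
  have h1 : r % 3 < 3 := Nat.mod_lt _ (by norm_num)
  have h2 : r' % 3 < 3 := Nat.mod_lt _ (by norm_num)
  set s := r % 3; set t := r' % 3
  interval_cases s <;> interval_cases t <;> simp only [pow_zero, pow_one] at h <;>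
    first
      | rfl
      | exact absurd h jC1
      | exact absurd h.symm jC1
      | exact absurd h jC2
      | exact absurd h.symm jC2
      | exact absurd h hne
      | exact absurd h.symm hne

section qfacts
variable {q a : ℂˣ} (hq : ∀ n : ℕ, 0 < n → (q : ℂ) ^ n ≠ 1)

include hq in
lemma qpow_inj {s t : ℕ} (h : (q:ℂ)^s = (q:ℂ)^t) : s = t := by
  rcases Nat.lt_trichotomy s t with hlt | he | hlt
  · exfalso
    apply hq (t - s) (by omega)
    have h2 : (q:ℂ)^s * (q:ℂ)^(t-s) = (q:ℂ)^s * 1 := by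
      rw [mul_one, ← pow_add, show s + (t - s) = t by omega]; exact h.symm
    exact mul_left_cancel₀ (pow_ne_zero _ q.ne_zero) h2
  · exact he
  · exfalso
    apply hq (s - t) (by omega)
    have h2 : (q:ℂ)^t * (q:ℂ)^(s-t) = (q:ℂ)^t * 1 := by
      rw [mul_one, ← pow_add, show t + (s - t) = s by omega]; exact h
    exact mul_left_cancel₀ (pow_ne_zero _ q.ne_zero) h2

include hq in
lemma UAeq (m m' r r' : ℕ) :
    (a * q^m * jC^r = a * q^m' * jC^r') ↔ (m = m' ∧ r % 3 = r' % 3) := by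
  have key : ∀ (s u : ℕ), ((q:ℂ)^s * (jC:ℂ)^u)^3 = ((q:ℂ)^s)^3 := by
    intro s u
    calc ((q:ℂ)^s * (jC:ℂ)^u)^3 = ((q:ℂ)^s)^3 * ((jC:ℂ)^3)^u := by ring
      _ = ((q:ℂ)^s)^3 := by rw [jC3, one_pow, mul_one]
  constructor
  · intro h
    have hv := congrArg Units.val h
    push_cast at hv
    have h' : (q:ℂ)^m * (jC:ℂ)^r = (q:ℂ)^m' * (jC:ℂ)^r' :=
      mul_left_cancel₀ a.ne_zero (by linear_combination hv)
    have hcube : ((q:ℂ))^(m*3) = ((q:ℂ))^(m'*3) := by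
      rw [pow_mul, pow_mul, ← key m r, ← key m' r', h']
    have hm : m = m' := by have := qpow_inj hq hcube; omega
    subst hm
    have hj : (jC:ℂ)^r = (jC:ℂ)^r' := mul_left_cancel₀ (pow_ne_zero _ q.ne_zero) h'
    exact ⟨rfl, jpow_inj hj⟩
  · rintro ⟨rfl, hr⟩
    rw [Units.ext_iff]
    push_cast
    rw [jmod r, jmod r', hr]

include hq in
lemma UBeq (m m' : ℕ) : ((a^3 * q^m : ℂˣ) = a^3 * q^m') ↔ m = m' := by
  constructor
  · intro h
    have hv := congrArg Units.val h
    push_cast at hv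
    exact qpow_inj hq (mul_left_cancel₀ (pow_ne_zero 3 a.ne_zero) hv)
  · rintro rfl; rfl
end qfacts


def eA (m M r R : ℕ) : ℤ := if m = M ∧ r % 3 = R % 3 then 1 else 0
def eB (m M : ℕ) : ℤ := if m = M then 1 else 0

lemma eA_nonneg (m M r R : ℕ) : 0 ≤ eA m M r R := by rw [eA]; split <;> norm_num
lemma eB_nonneg (m M : ℕ) : 0 ≤ eB m M := by rw [eB]; split <;> norm_num
lemma eA_of_false {m M r R : ℕ} (h : ¬(m = M ∧ r % 3 = R % 3)) : eA m M r R = 0 := by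
  rw [eA, if_neg h]
lemma eA_of_true {m M r R : ℕ} (h : m = M ∧ r % 3 = R % 3) : eA m M r R = 1 := by
  rw [eA, if_pos h]
lemma eB_of_false {m M : ℕ} (h : ¬ m = M) : eB m M = 0 := by rw [eB, if_neg h]
lemma eB_of_true {m M : ℕ} (h : m = M) : eB m M = 1 := by rw [eB, if_pos h]

section apply
variable {q a : ℂˣ} (hq : ∀ n : ℕ, 0 < n → (q : ℂ) ^ n ≠ 1)

lemma Zv_cross10 (u t : ℂˣ) : (Zv 1 u) ((0 : Fin 2), t) = 0 := by
  simp [Zv, Finsupp.single_apply, Prod.ext_iff]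
lemma Zv_cross01 (u t : ℂˣ) : (Zv 0 u) ((1 : Fin 2), t) = 0 := by
  simp [Zv, Finsupp.single_apply, Prod.ext_iff]

include hq in
lemma ZA_apply (m M r R : ℕ) :
    (Zv 0 (a*q^m*jC^r)) ((0 : Fin 2), a*q^M*jC^R) = eA m M r R := by
  rw [Zv, Finsupp.single_apply, eA]
  by_cases hc : m = M ∧ r % 3 = R % 3
  · rw [if_pos hc, if_pos (congrArg (fun u => ((0:Fin 2), u)) ((UAeq hq m M r R).mpr hc))]
  · rw [if_neg hc, if_neg (fun hp => hc ((UAeq hq m M r R).mp (congrArg Prod.snd hp)))]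

include hq in
lemma ZB_apply (m M : ℕ) :
    (Zv 1 (a^3*q^m)) ((1 : Fin 2), a^3*q^M) = eB m M := by
  rw [Zv, Finsupp.single_apply, eB]
  by_cases hc : m = M
  · rw [if_pos hc, if_pos (congrArg (fun u => ((1:Fin 2), u)) ((UBeq hq m M).mpr hc))]
  · rw [if_neg hc, if_neg (fun hp => hc ((UBeq hq m M).mp (congrArg Prod.snd hp)))]
end apply

def coefA : BB → ℕ → ℕ → ℕ → ℤ
  | .b1, p, M, R => eA (2*p) M 0 R
  | .b2, p, M, R => - eA (2*p+2) M 0 R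
  | .b3, p, M, R => eA (2*p+2) M 1 R + eA (2*p+2) M 2 R
  | .b4, p, M, R => eA (2*p+2) M 1 R - eA (2*p+4) M 2 R
  | .b4', p, M, R => eA (2*p+2) M 2 R - eA (2*p+4) M 1 R
  | .b3', p, M, R => - eA (2*p+4) M 1 R - eA (2*p+4) M 2 R
  | .b2', p, M, R => eA (2*p+4) M 0 R
  | .b1', p, M, R => - eA (2*p+6) M 0 R

def coefB : BB → ℕ → ℕ → ℤ
  | .b2, p, M => eB (6*p+3) M
  | .b3, p, M => - eB (6*p+9) M
  | .b3', p, M => eB (6*p+9) M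
  | .b2', p, M => - eB (6*p+15) M
  | _, _, _ => 0

section boxapply
variable {q a : ℂˣ} (hq : ∀ n : ℕ, 0 < n → (q : ℂ) ^ n ≠ 1)

include hq in
lemma boxA (β : BB) (p M R : ℕ) :
    (box q β (a*q^(2*p))) ((0 : Fin 2), a*q^M*jC^R) = coefA β p M R := by
  cases β <;> simp only [box, coefA] <;>
  [ rw [show (a*q^(2*p) : ℂˣ) = a*q^(2*p)*jC^0 from by rw [Units.ext_iff]; push_cast; ring];
    rw [show (a*q^(2*p) * q^2 : ℂˣ) = a*q^(2*p+2)*jC^0 from by rw [Units.ext_iff]; push_cast; ring];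
    rw [show (a*q^(2*p) * q^2 * jC : ℂˣ) = a*q^(2*p+2)*jC^1 from by rw [Units.ext_iff]; push_cast; ring,
       show (a*q^(2*p) * q^2 * jC^2 : ℂˣ) = a*q^(2*p+2)*jC^2 from by rw [Units.ext_iff]; push_cast; ring];
    rw [show (a*q^(2*p) * q^2 * jC : ℂˣ) = a*q^(2*p+2)*jC^1 from by rw [Units.ext_iff]; push_cast; ring,
       show (a*q^(2*p) * q^4 * jC^2 : ℂˣ) = a*q^(2*p+4)*jC^2 from by rw [Units.ext_iff]; push_cast; ring];
    rw [show (a*q^(2*p) * q^2 * jC^2 : ℂˣ) = a*q^(2*p+2)*jC^2 from by rw [Units.ext_iff]; push_cast; ring,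
       show (a*q^(2*p) * q^4 * jC : ℂˣ) = a*q^(2*p+4)*jC^1 from by rw [Units.ext_iff]; push_cast; ring];
    rw [show (a*q^(2*p) * q^4 * jC : ℂˣ) = a*q^(2*p+4)*jC^1 from by rw [Units.ext_iff]; push_cast; ring,
       show (a*q^(2*p) * q^4 * jC^2 : ℂˣ) = a*q^(2*p+4)*jC^2 from by rw [Units.ext_iff]; push_cast; ring];
    rw [show (a*q^(2*p) * q^4 : ℂˣ) = a*q^(2*p+4)*jC^0 from by rw [Units.ext_iff]; push_cast; ring];
    rw [show (a*q^(2*p) * q^6 : ℂˣ) = a*q^(2*p+6)*jC^0 from by rw [Units.ext_iff]; push_cast; ring]] <;>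
  simp only [Finsupp.add_apply, Finsupp.sub_apply, Finsupp.neg_apply, ZA_apply hq, Zv_cross10] <;> ring

include hq in
lemma boxB (β : BB) (p M : ℕ) :
    (box q β (a*q^(2*p))) ((1 : Fin 2), a^3*q^M) = coefB β p M := by
  cases β <;> simp only [box, coefB] <;>
  try rw [show ((a*q^(2*p))^3 * q^3 : ℂˣ) = a^3*q^(6*p+3) from by rw [Units.ext_iff]; push_cast; ring]
  all_goals try rw [show ((a*q^(2*p))^3 * q^9 : ℂˣ) = a^3*q^(6*p+9) from by rw [Units.ext_iff]; push_cast; ring]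
  all_goals try rw [show ((a*q^(2*p))^3 * q^15 : ℂˣ) = a^3*q^(6*p+15) from by rw [Units.ext_iff]; push_cast; ring]
  all_goals simp only [Finsupp.add_apply, Finsupp.sub_apply, Finsupp.neg_apply, ZB_apply hq, Zv_cross01]
  all_goals ring
end boxapply

lemma rank_le_of_le {x y : BB} (h : BB.le x y) : x.rank ≤ y.rank := by
  rcases h with rfl | h
  exacts [le_rfl, h.le]

lemma tab_mono {k : ℕ} {T : Fin k → BB} (hT : IsTab1 k T) :
    ∀ (n : ℕ) (hn : n < k) (m : ℕ) (hm : m ≤ n),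
      (T ⟨m, lt_of_le_of_lt hm hn⟩).rank ≤ (T ⟨n, hn⟩).rank := by
  intro n
  induction n with
  | zero => intro hn m hm; interval_cases m; exact le_rfl
  | succ n ih =>
    intro hn m hm
    rcases Nat.eq_or_lt_of_le hm with rfl | hlt
    · exact le_rfl
    · exact le_trans (ih (by omega) m (by omega)) (rank_le_of_le (hT n hn))

lemma combo2 {x y : ℤ} (hx : 0 ≤ x) (hy : 0 ≤ y) : -x - y ≤ 0 := by omega
lemma zero_sub_le {y : ℤ} (hy : 0 ≤ y) : 0 - y ≤ 0 := by omega

lemma sum_neg {k : ℕ} (c : Fin k → ℤ) (L : Fin k) (h0 : ∀ p, c p ≤ 0)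
    (hL : c L = -1) : ∑ p, c p < 0 := by
  have h1 : ∑ p : Fin k, c p ≤ ∑ p : Fin k, (if p = L then (-1:ℤ) else 0) := by
    apply Finset.sum_le_sum
    intro p _
    by_cases hp : p = L
    · rw [if_pos hp, hp, hL]
    · rw [if_neg hp]; exact h0 p
  have h2 : ∑ p : Fin k, (if p = L then (-1:ℤ) else 0) = -1 := by
    rw [Finset.sum_ite_eq']
    simp
  omega

section main
variable {q a : ℂˣ} (hq : ∀ n : ℕ, 0 < n → (q : ℂ) ^ n ≠ 1)

include hq in
lemma dom_forces {k : ℕ} (hk : 1 ≤ k) {T : Fin k → BB} (hT : IsTab1 k T)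
    (hdom : ∀ lb : Fin 2 × ℂˣ, 0 ≤ m1 q T a lb) : ∀ p, T p = BB.b1 := by
  by_contra hcon
  push_neg at hcon
  obtain ⟨p0, hp0⟩ := hcon
  have hkk : k - 1 < k := by omega
  set L : Fin k := ⟨k-1, hkk⟩ with hLdef
  have hmono : ∀ p : Fin k, (T p).rank ≤ (T L).rank := by
    intro p
    have hple : (p:ℕ) ≤ k - 1 := by have := p.isLt; omega
    have h := tab_mono hT (k-1) hkk (p:ℕ) hple
    exact h
  have key : ∃ lb : Fin 2 × ℂˣ, m1 q T a lb < 0 := by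
    have hp0r : 1 ≤ (T L).rank := by
      have h := hmono p0
      cases hx : T p0 <;>
        first
        | exact absurd hx hp0
        | (rw [hx] at h; exact le_trans (by norm_num [BB.rank]) h)
    cases hc : T L with
    | b1 => rw [hc] at hp0r; simp [BB.rank] at hp0r
    | b2 =>
      refine ⟨((0:Fin 2), a*q^(2*(k-1)+2)*jC^0), ?_⟩
      simp only [m1]
      rw [Finsupp.finset_sum_apply,
        Finset.sum_congr rfl fun p _ => boxA hq (T p) (p:ℕ) (2*(k-1)+2) 0]
      apply sum_neg _ L
      · intro p
        have hp := p.isLt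
        have hr := hmono p
        rw [hc] at hr
        cases hβ : T p <;> rw [hβ] at hr <;> simp [BB.rank] at hr <;>
          simp only [coefA, eA] <;>
          first
          | omega
          | (split_ifs <;> first | omega | simp_all)
      · rw [hc]
        show coefA BB.b2 (k-1) (2*(k-1)+2) 0 = -1
        simp only [coefA, eA]
        split_ifs <;> first | omega | simp_all
    | b3 =>
      refine ⟨((1:Fin 2), a^3*q^(6*(k-1)+9)), ?_⟩
      simp only [m1]
      rw [Finsupp.finset_sum_apply,
        Finset.sum_congr rfl fun p _ => boxB hq (T p) (p:ℕ) (6*(k-1)+9)]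
      apply sum_neg _ L
      · intro p
        have hp := p.isLt
        by_cases hpK : p = L
        · rw [hpK, hc]
          simp only [coefB, eB]
          first
          | omega
          | (split_ifs <;> first | omega | simp_all)
        · have hpK' : (p:ℕ) ≠ k-1 := fun h => hpK (Fin.ext h)
          cases hβ : T p <;> simp only [coefB, eB] <;>
            first
            | omega
            | (split_ifs <;> first | omega | simp_all)
      · rw [hc]
        show coefB BB.b3 (k-1) (6*(k-1)+9) = -1
        simp only [coefB, eB]
        split_ifs <;> first | omega | simp_all
    | b4 =>
      refine ⟨((0:Fin 2), a*q^(2*(k-1)+4)*jC^2), ?_⟩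
      simp only [m1]
      rw [Finsupp.finset_sum_apply,
        Finset.sum_congr rfl fun p _ => boxA hq (T p) (p:ℕ) (2*(k-1)+4) 2]
      apply sum_neg _ L
      · intro p
        have hp := p.isLt
        cases hβ : T p <;> simp only [coefA, eA] <;> first | omega | (split_ifs <;> first | omega | simp_all)
      · rw [hc]
        show coefA BB.b4 (k-1) (2*(k-1)+4) 2 = -1
        simp only [coefA, eA]
        split_ifs <;> first | omega | simp_all
    | b4' =>
      refine ⟨((0:Fin 2), a*q^(2*(k-1)+4)*jC^1), ?_⟩
      simp only [m1]
      rw [Finsupp.finset_sum_apply,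
        Finset.sum_congr rfl fun p _ => boxA hq (T p) (p:ℕ) (2*(k-1)+4) 1]
      apply sum_neg _ L
      · intro p
        have hp := p.isLt
        cases hβ : T p <;> simp only [coefA, eA] <;> first | omega | (split_ifs <;> first | omega | simp_all)
      · rw [hc]
        show coefA BB.b4' (k-1) (2*(k-1)+4) 1 = -1
        simp only [coefA, eA]
        split_ifs <;> first | omega | simp_all
    | b3' =>
      refine ⟨((0:Fin 2), a*q^(2*(k-1)+4)*jC^1), ?_⟩
      simp only [m1]
      rw [Finsupp.finset_sum_apply,
        Finset.sum_congr rfl fun p _ => boxA hq (T p) (p:ℕ) (2*(k-1)+4) 1]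
      apply sum_neg _ L
      · intro p
        have hp := p.isLt
        cases hβ : T p <;> simp only [coefA, eA] <;> first | omega | (split_ifs <;> first | omega | simp_all)
      · rw [hc]
        show coefA BB.b3' (k-1) (2*(k-1)+4) 1 = -1
        simp only [coefA, eA]
        split_ifs <;> first | omega | simp_all
    | b2' =>
      refine ⟨((1:Fin 2), a^3*q^(6*(k-1)+15)), ?_⟩
      simp only [m1]
      rw [Finsupp.finset_sum_apply,
        Finset.sum_congr rfl fun p _ => boxB hq (T p) (p:ℕ) (6*(k-1)+15)]
      apply sum_neg _ L
      · intro p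
        have hp := p.isLt
        cases hβ : T p <;> simp only [coefB, eB] <;> first | omega | (split_ifs <;> first | omega | simp_all)
      · rw [hc]
        show coefB BB.b2' (k-1) (6*(k-1)+15) = -1
        simp only [coefB, eB]
        split_ifs <;> first | omega | simp_all
    | b1' =>
      refine ⟨((0:Fin 2), a*q^(2*(k-1)+6)*jC^0), ?_⟩
      simp only [m1]
      rw [Finsupp.finset_sum_apply,
        Finset.sum_congr rfl fun p _ => boxA hq (T p) (p:ℕ) (2*(k-1)+6) 0]
      apply sum_neg _ L
      · intro p
        have hp := p.isLt
        cases hβ : T p <;> simp only [coefA, eA] <;> first | omega | (split_ifs <;> first | omega | simp_all)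
      · rw [hc]
        show coefA BB.b1' (k-1) (2*(k-1)+6) 0 = -1
        simp only [coefA, eA]
        split_ifs <;> first | omega | simp_all
  obtain ⟨lb, hlb⟩ := key
  exact absurd (hdom lb) (not_le.mpr hlb)

end main


lemma tab_const {k : ℕ} : IsTab1 k (fun _ => BB.b1) := fun _ _ => Or.inl rfl

lemma m1_const (q : ℂˣ) {k : ℕ} (a : ℂˣ) {T : Fin k → BB} (h : ∀ p, T p = BB.b1) :
    m1 q T a = ∑ p : Fin k, Zv 0 (a * q ^ (2 * (p:ℕ))) := by
  unfold m1
  exact Finset.sum_congr rfl fun p _ => by rw [h p]; rfl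

lemma mtop_dom (q a : ℂˣ) (k : ℕ) :
    ∀ lb : Fin 2 × ℂˣ, 0 ≤ (∑ p : Fin k, Zv 0 (a * q ^ (2 * (p:ℕ)))) lb := by
  intro lb
  rw [Finsupp.finset_sum_apply]
  refine Finset.sum_nonneg fun p _ => ?_
  rw [Zv, Finsupp.single_apply]
  split <;> norm_num

/-- `m^{(1)}_{T,a}` is dominant iff `T = (1,…,1)`, in which case it is
`∏_p Z_{1,aq^{2(p-1)}}`; consequently the twisted q-character of the
Kirillov–Reshetikhin module `W^{(1)}_{k,a}` of type `D₄⁽³⁾` has a unique dominant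
monomial, occurring with coefficient `1` (the module is special). -/
theorem W1_special (q : ℂˣ) (hq : ∀ n : ℕ, 0 < n → (q : ℂ) ^ n ≠ 1)
    (k : ℕ) (hk : 1 ≤ k) (a : ℂˣ) :
    (∀ T : Fin k → BB, IsTab1 k T →
      (((∀ lb : Fin 2 × ℂˣ, 0 ≤ (m1 q T a) lb) ↔ ∀ p : Fin k, T p = BB.b1) ∧
        ((∀ p : Fin k, T p = BB.b1) →
          m1 q T a = ∑ p : Fin k, Zv 0 (a * q ^ (2 * (p : ℕ))))))
    ∧ (S1 q k a).coeff (∑ p : Fin k, Zv 0 (a * q ^ (2 * (p : ℕ)))) = 1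
    ∧ (∀ m : Mon2, (S1 q k a).coeff m ≠ 0 → (∀ lb : Fin 2 × ℂˣ, 0 ≤ m lb) →
        m = ∑ p : Fin k, Zv 0 (a * q ^ (2 * (p : ℕ)))) := by
  classical
  set mtop : Mon2 := ∑ p : Fin k, Zv 0 (a * q ^ (2 * (p:ℕ))) with hmtop
  have hA : ∀ T : Fin k → BB, IsTab1 k T →
      (((∀ lb : Fin 2 × ℂˣ, 0 ≤ (m1 q T a) lb) ↔ ∀ p : Fin k, T p = BB.b1) ∧
        ((∀ p : Fin k, T p = BB.b1) → m1 q T a = mtop)) := by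
    intro T hT
    refine ⟨⟨fun hdom => dom_forces hq hk hT hdom, fun hall lb => ?_⟩,
      fun hall => m1_const q a hall⟩
    rw [m1_const q a hall]
    exact mtop_dom q a k lb
  have happ : ∀ m : Mon2, (S1 q k a).coeff m =
      ∑ T : Fin k → BB,
        (if IsTab1 k T then (AddMonoidAlgebra.single (m1 q T a) (1:ℤ)) else 0).coeff m := by
    intro m
    rw [S1, AddMonoidAlgebra.coeff_sum]
    exact Finsupp.finset_sum_apply _ _ _
  have hterm : ∀ (T : Fin k → BB) (m : Mon2),
      (if IsTab1 k T then (AddMonoidAlgebra.single (m1 q T a) (1:ℤ)) else 0).coeff m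
        = if IsTab1 k T ∧ m1 q T a = m then 1 else 0 := by
    intro T m
    by_cases hT : IsTab1 k T
    · rw [if_pos hT]
      show Finsupp.single (m1 q T a) 1 m = _
      rw [Finsupp.single_apply]
      by_cases he : m1 q T a = m
      · rw [if_pos he, if_pos ⟨hT, he⟩]
      · rw [if_neg he, if_neg (fun hc => he hc.2)]
    · rw [if_neg hT, if_neg (fun hc => hT hc.1)]
      rfl
  have hiff : ∀ T : Fin k → BB,
      (IsTab1 k T ∧ m1 q T a = mtop) ↔ T = (fun _ => BB.b1) := by
    intro T
    constructor
    · rintro ⟨hT, hm⟩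
      have hdom : ∀ lb : Fin 2 × ℂˣ, 0 ≤ (m1 q T a) lb := by
        intro lb; rw [hm]; exact mtop_dom q a k lb
      exact funext (dom_forces hq hk hT hdom)
    · rintro rfl
      exact ⟨tab_const, m1_const q a (fun _ => rfl)⟩
  refine ⟨hA, ?_, ?_⟩
  · rw [happ]
    rw [Finset.sum_congr rfl fun T _ => hterm T mtop]
    have hcond : ∀ T : Fin k → BB,
        (if IsTab1 k T ∧ m1 q T a = mtop then (1:ℤ) else 0)
          = if T = (fun _ => BB.b1) then 1 else 0 := by
      intro T
      by_cases h : T = fun _ => BB.b1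
      · rw [if_pos h, if_pos ((hiff T).mpr h)]
      · rw [if_neg h, if_neg (fun hc => h ((hiff T).mp hc))]
    rw [Finset.sum_congr rfl fun T _ => hcond T]
    rw [Finset.sum_ite_eq']
    simp
  · intro m hne hdom
    rw [happ] at hne
    obtain ⟨T, _, hT0⟩ := Finset.exists_ne_zero_of_sum_ne_zero hne
    rw [hterm] at hT0
    have hc : IsTab1 k T ∧ m1 q T a = m := by
      by_contra hcc
      rw [if_neg hcc] at hT0
      exact hT0 rfl
    obtain ⟨hT, hm⟩ := hc
    have hall : ∀ p, T p = BB.b1 :=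
      dom_forces hq hk hT (fun lb => by rw [hm]; exact hdom lb)
    rw [← hm, m1_const q a hall]
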